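/- Assume p ≠ 2 and let ψ be the quadratic character of F_q^× with ψ(0) = 0. Then the Fourier transform of the function x ↦ ψ(Disc(x)) on binary quadratic forms satisfies: \hat{(ψ∘Disc)}(y) = q^{-1} − q^{-2} if Disc(y) = 0, and \hat{(ψ∘Disc)}(y) = −q^{-2} if Disc(y) ≠ 0. In particular, this Fourier transform does not vanish on the singular set. -/

import Mathlib

open scoped Classical
open MvPolynomial Matrix

noncomputable section

/-- The standard additive character `t ↦ exp(2πi·Tr_{F/F_p}(t)/p)` of a finite field `F`
of characteristic `p`. -/
def psiF (p : ℕ) [Fact p.Prime] (F : Type*) [Field F] [Fintype F] [CharP F p] (t : F) : ℂ :=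
  letI : Algebra (ZMod p) F := ZMod.algebra F p
  Complex.exp (2 * Real.pi * Complex.I * ((Algebra.trace (ZMod p) F t).val : ℂ) / (p : ℂ))

variable {F : Type*} [Field F] [Fintype F]

/-- The bilinear form `[x,x'] = aa' + bb'/2 + cc'` on binary quadratic forms. -/
def bformBQ (x y : Fin 3 → F) : F := x 0 * y 0 + x 1 * y 1 / 2 + x 2 * y 2

/-- The Fourier transform on the space of binary quadratic forms over `F`. -/
def FTBQ (p : ℕ) [Fact p.Prime] [CharP F p] (Φ : (Fin 3 → F) → ℂ) (y : Fin 3 → F) : ℂ :=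
  ((Fintype.card F : ℂ) ^ 3)⁻¹ * ∑ x : Fin 3 → F, Φ x * psiF p F (bformBQ x y)

/-- The discriminant `b² - 4ac` of a binary quadratic form. -/
def DiscBQ (x : Fin 3 → F) : F := (x 1)^2 - 4 * x 0 * x 2

/-- The quadratic character of `F`, extended by `0 ↦ 0`, with values in `ℂ`. -/
def qchar (a : F) : ℂ := if a = 0 then 0 else if IsSquare a then 1 else -1

/-! ### Auxiliary material for the proof -/

namespace Stmt12Aux

open Finset AddChar

/-- The additive character `psiF`, packaged as an `AddChar`. -/
def psiE (p : ℕ) [Fact p.Prime] (F : Type*) [Field F] [Fintype F] [CharP F p] :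
    AddChar F ℂ :=
  letI : Algebra (ZMod p) F := ZMod.algebra F p
  ZMod.stdAddChar.compAddMonoidHom (Algebra.trace (ZMod p) F).toAddMonoidHom

variable (p : ℕ) [Fact p.Prime] [CharP F p]

lemma psiF_eq (t : F) : psiF p F t = psiE p F t := by
  letI : Algebra (ZMod p) F := ZMod.algebra F p
  have h1 : psiE p F t = ZMod.stdAddChar (Algebra.trace (ZMod p) F t) := rfl
  set j := Algebra.trace (ZMod p) F t with hj
  have h2 : (((j.val : ℤ)) : ZMod p) = j := by
    push_cast
    rw [ZMod.natCast_val, ZMod.cast_id]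
  rw [h1, ← h2, ZMod.stdAddChar_coe]
  unfold psiF
  push_cast
  ring_nf
  rw [hj]
  ring_nf
  
lemma psiE_ne_one : psiE p F ≠ 1 := by
  obtain rfl := ringChar.eq F p
  letI : Algebra (ZMod (ringChar F)) F := ZMod.algebra F (ringChar F)
  obtain ⟨b, hb⟩ := FiniteField.trace_to_zmod_nondegenerate F (one_ne_zero (α := F))
  rw [one_mul] at hb
  intro h
  apply hb
  have hb1 : psiE (ringChar F) F b = 1 := by rw [h]; rfl
  have : ZMod.stdAddChar (Algebra.trace (ZMod (ringChar F)) F b) = ZMod.stdAddChar (0 : ZMod (ringChar F)) := by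
    rw [map_zero_eq_one]; exact hb1
  exact ZMod.injective_stdAddChar this

lemma psiE_prim : (psiE p F).IsPrimitive :=
  AddChar.IsPrimitive.of_ne_one (psiE_ne_one p)

/-- The quadratic character with complex values. -/
def chiQ (F : Type*) [Field F] [Fintype F] : MulChar F ℂ :=
  (quadraticChar F).ringHomComp (Int.castRingHom ℂ)

lemma qchar_eq (a : F) : qchar a = chiQ F a := by
  unfold qchar chiQ
  rw [MulChar.ringHomComp_apply, quadraticChar_apply, quadraticCharFun]
  by_cases h0 : a = 0
  · simp [h0]
  · by_cases hs : IsSquare a <;> simp [h0, hs]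

variable {p}

section odd

variable (hF2 : ringChar F ≠ 2)
include hF2

lemma chiQ_ne_one : chiQ F ≠ 1 := by
  obtain ⟨a, ha⟩ := quadraticChar_exists_neg_one' hF2
  intro h
  have h1 : chiQ F a = 1 := by rw [h]; exact MulChar.one_apply_coe a
  rw [chiQ, MulChar.ringHomComp_apply, ha] at h1
  norm_num at h1

lemma chiQ_sq (u : F) (hu : u ≠ 0) : chiQ F u * chiQ F u = 1 := by
  have h := quadraticChar_sq_one (F := F) hu
  rw [pow_two] at h
  have he : chiQ F u = ((quadraticChar F u : ℤ) : ℂ) := rfl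
  rw [he]
  exact_mod_cast h

end odd

lemma chiQ_zero : chiQ F 0 = 0 := by
  rw [chiQ, MulChar.ringHomComp_apply, quadraticChar_zero]; simp

/-- The Gauss sum for priming. -/
lemma gauss_ne_zero (hF2 : ringChar F ≠ 2) :
    gaussSum (chiQ F) (psiE p F) ≠ 0 := by
  apply gaussSum_ne_zero_of_nontrivial _ (chiQ_ne_one hF2) (psiE_prim p)
  exact_mod_cast Nat.cast_ne_zero.mpr Fintype.card_ne_zero

/-- Key lemma: `∑ u, χ(u) ψ(u D) = χ(D) g`. -/
lemma L1 (hF2 : ringChar F ≠ 2) (D : F) :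
    ∑ u : F, chiQ F u * psiE p F (u * D) = chiQ F D * gaussSum (chiQ F) (psiE p F) := by
  by_cases hD : D = 0
  · simp only [hD, mul_zero, map_zero_eq_one, mul_one, chiQ_zero, zero_mul]
    exact MulChar.sum_eq_zero_of_ne_one (chiQ_ne_one hF2)
  · have h := gaussSum_mulShift (chiQ F) (psiE p F) (Units.mk0 D hD)
    have h2 : gaussSum (chiQ F) ((psiE p F).mulShift (Units.mk0 D hD)) =
        ∑ u : F, chiQ F u * psiE p F (u * D) := by
      unfold gaussSum
      refine Finset.sum_congr rfl fun u _ => ?_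
      rw [AddChar.mulShift_apply, Units.val_mk0, mul_comm D u]
    rw [h2] at h
    calc ∑ u : F, chiQ F u * psiE p F (u * D)
        = chiQ F D * (chiQ F D * ∑ u : F, chiQ F u * psiE p F (u * D)) := by
          rw [← mul_assoc, chiQ_sq hF2 D hD, one_mul]
      _ = chiQ F D * gaussSum (chiQ F) (psiE p F) := by
          rw [show (chiQ F D : ℂ) * ∑ u : F, chiQ F u * psiE p F (u * D) =
            (chiQ F (Units.mk0 D hD) : ℂ) * ∑ u : F, chiQ F u * psiE p F (u * D) from rfl, h]

/-- `∑ b, ψ(u b²) = χ(u) g` for `u ≠ 0`. -/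
lemma quad_sum (hF2 : ringChar F ≠ 2) (u : F) (hu : u ≠ 0) :
    ∑ b : F, psiE p F (u * b ^ 2) = chiQ F u * gaussSum (chiQ F) (psiE p F) := by
  have hfib : ∑ b : F, psiE p F (u * b ^ 2)
      = ∑ s : F, ∑ b ∈ Finset.univ.filter (fun b : F => b ^ 2 = s), psiE p F (u * s) := by
    rw [Finset.sum_fiberwise' Finset.univ (fun b : F => b ^ 2) (fun s => psiE p F (u * s))]
  rw [hfib]
  have hcard : ∀ s : F,
      ((Finset.univ.filter (fun b : F => b ^ 2 = s)).card : ℂ) = chiQ F s + 1 := by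
    intro s
    have h := quadraticChar_card_sqrts hF2 s
    have hset : {x : F | x ^ 2 = s}.toFinset = Finset.univ.filter (fun b : F => b ^ 2 = s) := by
      ext x; simp
    rw [hset] at h
    have : ((Finset.univ.filter (fun b : F => b ^ 2 = s)).card : ℂ)
        = (((Finset.univ.filter (fun b : F => b ^ 2 = s)).card : ℤ) : ℂ) := by push_cast; ring
    rw [this, h]
    push_cast
    rw [chiQ, MulChar.ringHomComp_apply]
    norm_num
  have hconst : ∀ s : F, ∑ b ∈ Finset.univ.filter (fun b : F => b ^ 2 = s), psiE p F (u * s)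
      = (chiQ F s + 1) * psiE p F (u * s) := by
    intro s
    rw [Finset.sum_const, nsmul_eq_mul, hcard]
  simp_rw [hconst, add_mul, one_mul, Finset.sum_add_distrib]
  have hzero : ∑ s : F, psiE p F (u * s) = 0 := by
    have h' := AddChar.sum_mulShift (R := F) (R' := ℂ) u (psiE_prim p)
    rw [if_neg hu] at h'
    calc ∑ s : F, psiE p F (u * s) = ∑ s : F, psiE p F (s * u) := by
          refine Finset.sum_congr rfl fun s _ => by rw [mul_comm]
      _ = 0 := by exact_mod_cast h'
  rw [hzero, add_zero]
  calc ∑ s : F, chiQ F s * psiE p F (u * s)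
      = ∑ s : F, chiQ F s * psiE p F (s * u) := by
        refine Finset.sum_congr rfl fun s _ => by rw [mul_comm u s]
    _ = chiQ F u * gaussSum (chiQ F) (psiE p F) := L1 hF2 u

/-- Completing the square: `∑ b, ψ(u b² + β b) = χ(u) g ψ(-β²/(4u))` for `u ≠ 0`. -/
lemma quad_shift (hF2 : ringChar F ≠ 2) (u β : F) (hu : u ≠ 0) :
    ∑ b : F, psiE p F (u * b ^ 2 + β * b)
      = chiQ F u * gaussSum (chiQ F) (psiE p F) * psiE p F (-(β ^ 2) / (4 * u)) := by
  have h2 : (2 : F) ≠ 0 := Ring.two_ne_zero hF2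
  have h4 : (4 : F) ≠ 0 := by
    have : (4 : F) = 2 * 2 := by norm_num
    rw [this]; exact mul_ne_zero h2 h2
  have hsub : ∑ b : F, psiE p F (u * b ^ 2 + β * b)
      = ∑ t : F, psiE p F (u * t ^ 2 + -(β ^ 2) / (4 * u)) := by
    refine Fintype.sum_equiv (Equiv.addRight (β / (2 * u))) _ _ fun b => ?_
    congr 1
    show u * b ^ 2 + β * b = u * (b + β / (2 * u)) ^ 2 + -β ^ 2 / (4 * u)
    field_simp
    ring
  rw [hsub]
  simp_rw [AddChar.map_add_eq_mul, ← Finset.sum_mul]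
  rw [quad_sum hF2 u hu]


/-- Identification of `F × F × F` with binary quadratic forms, ordered for summation. -/
def tripEquiv (F : Type*) : (F × F × F) ≃ (Fin 3 → F) where
  toFun t := ![t.2.2, t.1, t.2.1]
  invFun x := (x 1, x 2, x 0)
  left_inv := by rintro ⟨b, c, a⟩; rfl
  right_inv := by intro x; funext i; fin_cases i <;> rfl

lemma sum_triple (f : (Fin 3 → F) → ℂ) :
    ∑ x : Fin 3 → F, f x = ∑ b : F, ∑ c : F, ∑ a : F, f ![a, b, c] := by
  rw [← Equiv.sum_comp (tripEquiv F) f, Fintype.sum_prod_type]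
  refine Finset.sum_congr rfl fun b _ => ?_
  rw [Fintype.sum_prod_type]
  rfl

lemma DiscBQ_mk (a b c : F) : DiscBQ ![a, b, c] = b ^ 2 - 4 * a * c := rfl

lemma bformBQ_mk (a b c : F) (y : Fin 3 → F) :
    bformBQ ![a, b, c] y = a * y 0 + b * y 1 / 2 + c * y 2 := rfl

/-- The central computation: value of `∑ₓ ψ(u·Disc(x) + [x,y])` for `u ≠ 0`. -/
lemma Tval (hF2 : ringChar F ≠ 2) (u : F) (hu : u ≠ 0) (y : Fin 3 → F) :
    ∑ x : Fin 3 → F, psiE p F (u * DiscBQ x + bformBQ x y)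
      = (Fintype.card F : ℂ) * (chiQ F u * gaussSum (chiQ F) (psiE p F))
          * psiE p F (-(DiscBQ y) / (16 * u)) := by
  have h2 : (2 : F) ≠ 0 := Ring.two_ne_zero hF2
  have h4 : (4 : F) ≠ 0 := by
    have h : (4 : F) = 2 * 2 := by norm_num
    rw [h]; exact mul_ne_zero h2 h2
  have h16 : (16 : F) ≠ 0 := by
    have h : (16 : F) = 4 * 4 := by norm_num
    rw [h]; exact mul_ne_zero h4 h4
  have h4u : (4 : F) * u ≠ 0 := mul_ne_zero h4 hu
  rw [sum_triple]
  have hA : ∀ b c : F,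
      ∑ a : F, psiE p F (u * DiscBQ ![a, b, c] + bformBQ ![a, b, c] y)
        = psiE p F ((u * b ^ 2 + b * (y 1 / 2)) + c * y 2) *
            (if y 0 - 4 * u * c = 0 then (Fintype.card F : ℂ) else 0) := by
    intro b c
    have hs := AddChar.sum_mulShift (R := F) (R' := ℂ) (y 0 - 4 * u * c) (psiE_prim p)
    calc ∑ a : F, psiE p F (u * DiscBQ ![a, b, c] + bformBQ ![a, b, c] y)
        = ∑ a : F, psiE p F ((u * b ^ 2 + b * (y 1 / 2)) + c * y 2)
            * psiE p F (a * (y 0 - 4 * u * c)) := by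
          refine Finset.sum_congr rfl fun a _ => ?_
          rw [← AddChar.map_add_eq_mul]
          congr 1
          rw [DiscBQ_mk, bformBQ_mk]
          ring
      _ = psiE p F ((u * b ^ 2 + b * (y 1 / 2)) + c * y 2)
            * ∑ a : F, psiE p F (a * (y 0 - 4 * u * c)) := by rw [Finset.mul_sum]
      _ = _ := by rw [hs, apply_ite (Nat.cast : ℕ → ℂ), Nat.cast_zero]
  simp_rw [hA]
  have hcond : ∀ c : F, (y 0 - 4 * u * c = 0) ↔ (c = y 0 / (4 * u)) := by
    intro c
    rw [sub_eq_zero, eq_div_iff h4u]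
    constructor
    · intro h; rw [h]; ring
    · intro h; rw [← h]; ring
  have hC : ∀ b : F,
      ∑ c : F, psiE p F ((u * b ^ 2 + b * (y 1 / 2)) + c * y 2) *
          (if y 0 - 4 * u * c = 0 then (Fintype.card F : ℂ) else 0)
        = psiE p F ((u * b ^ 2 + b * (y 1 / 2)) + (y 0 / (4 * u)) * y 2)
            * (Fintype.card F : ℂ) := by
    intro b
    have step : ∀ c : F, psiE p F ((u * b ^ 2 + b * (y 1 / 2)) + c * y 2) *
          (if y 0 - 4 * u * c = 0 then (Fintype.card F : ℂ) else 0)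
        = if c = y 0 / (4 * u) then
            psiE p F ((u * b ^ 2 + b * (y 1 / 2)) + c * y 2) * (Fintype.card F : ℂ) else 0 := by
      intro c
      by_cases hc : c = y 0 / (4 * u)
      · rw [if_pos ((hcond c).mpr hc), if_pos hc]
      · rw [if_neg (fun h => hc ((hcond c).mp h)), if_neg hc, mul_zero]
    simp_rw [step]
    rw [Finset.sum_ite_eq' Finset.univ (y 0 / (4 * u))
      (fun c => psiE p F ((u * b ^ 2 + b * (y 1 / 2)) + c * y 2) * (Fintype.card F : ℂ)),
      if_pos (Finset.mem_univ _)]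
  simp_rw [hC]
  have hsplit : ∀ b : F, psiE p F ((u * b ^ 2 + b * (y 1 / 2)) + (y 0 / (4 * u)) * y 2)
      = psiE p F (u * b ^ 2 + (y 1 / 2) * b) * psiE p F ((y 0 / (4 * u)) * y 2) := by
    intro b
    rw [← AddChar.map_add_eq_mul]
    congr 1
    ring
  simp_rw [hsplit, ← Finset.sum_mul]
  rw [quad_shift hF2 u (y 1 / 2) hu]
  have harg : psiE p F (-(y 1 / 2) ^ 2 / (4 * u)) * psiE p F (y 0 / (4 * u) * y 2)
      = psiE p F (-(DiscBQ y) / (16 * u)) := by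
    rw [← AddChar.map_add_eq_mul]
    congr 1
    unfold DiscBQ
    field_simp [hu, h16]
    ring
  calc chiQ F u * gaussSum (chiQ F) (psiE p F) * psiE p F (-(y 1 / 2) ^ 2 / (4 * u))
        * psiE p F (y 0 / (4 * u) * y 2) * (Fintype.card F : ℂ)
      = (Fintype.card F : ℂ) * (chiQ F u * gaussSum (chiQ F) (psiE p F))
          * (psiE p F (-(y 1 / 2) ^ 2 / (4 * u)) * psiE p F (y 0 / (4 * u) * y 2)) := by ring
    _ = _ := by rw [harg]

end Stmt12Aux

/-- Fourier transform of the quadratic character of the discriminant of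
binary quadratic forms; it does not vanish on the singular set. -/
theorem stmt12 (p : ℕ) [Fact p.Prime] [CharP F p] (hp : p ≠ 2) :
    let Q : ℂ := (Fintype.card F : ℂ)
    (∀ y : Fin 3 → F,
      (DiscBQ y = 0 → FTBQ p (fun x => qchar (DiscBQ x)) y = 1/Q - 1/Q^2) ∧
      (DiscBQ y ≠ 0 → FTBQ p (fun x => qchar (DiscBQ x)) y = -(1/Q^2))) ∧
    (∀ y : Fin 3 → F, DiscBQ y = 0 → FTBQ p (fun x => qchar (DiscBQ x)) y ≠ 0) := by
  intro Q
  have hQ : Q = (Fintype.card F : ℂ) := rfl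
  open Stmt12Aux in
  have hF2 : ringChar F ≠ 2 := by rw [ringChar.eq F p]; exact hp
  have h2 : (2 : F) ≠ 0 := Ring.two_ne_zero hF2
  have h4 : (4 : F) ≠ 0 := by
    have h : (4 : F) = 2 * 2 := by norm_num
    rw [h]; exact mul_ne_zero h2 h2
  have h16 : (16 : F) ≠ 0 := by
    have h : (16 : F) = 4 * 4 := by norm_num
    rw [h]; exact mul_ne_zero h4 h4
  have hgne : gaussSum (Stmt12Aux.chiQ F) (Stmt12Aux.psiE p F) ≠ 0 := Stmt12Aux.gauss_ne_zero hF2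
  have hq0 : (Fintype.card F : ℂ) ≠ 0 := Nat.cast_ne_zero.mpr Fintype.card_ne_zero
  have hq1 : (Fintype.card F : ℂ) ≠ 1 := by
    intro h
    have h' : ((Fintype.card F : ℕ) : ℂ) = ((1 : ℕ) : ℂ) := by rw [h]; norm_num
    have := Nat.cast_injective (R := ℂ) h'
    have hlt := Fintype.one_lt_card (α := F)
    omega
  have main : ∀ y : Fin 3 → F, FTBQ p (fun x => qchar (DiscBQ x)) y
      = if DiscBQ y = 0 then
          1 / (Fintype.card F : ℂ) - 1 / (Fintype.card F : ℂ) ^ 2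
        else -(1 / (Fintype.card F : ℂ) ^ 2) := by
    intro y
    set ψ := Stmt12Aux.psiE p F with hψ
    set χ := Stmt12Aux.chiQ F with hχ
    set g := gaussSum χ ψ with hgdef
    set q : ℂ := (Fintype.card F : ℂ) with hqdef
    -- the per-u identity
    have per_u : ∀ u : F,
        χ u * (∑ x : Fin 3 → F, ψ (u * DiscBQ x + bformBQ x y))
          = q * g * (χ u * χ u) * ψ (-(DiscBQ y) / (16 * u)) := by
      intro u
      by_cases hu : u = 0
      · rw [hu]
        rw [show χ (0 : F) = 0 from Stmt12Aux.chiQ_zero]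
        ring
      · rw [Stmt12Aux.Tval hF2 u hu y]
        ring
    -- the main sum identity (after multiplying by g)
    have hS : ∑ x : Fin 3 → F, qchar (DiscBQ x) * psiF p F (bformBQ x y)
        = q * ∑ u ∈ Finset.univ.erase (0 : F), ψ (-(DiscBQ y) / (16 * u)) := by
      apply mul_left_cancel₀ hgne
      calc g * ∑ x : Fin 3 → F, qchar (DiscBQ x) * psiF p F (bformBQ x y)
          = ∑ x : Fin 3 → F, (χ (DiscBQ x) * g) * ψ (bformBQ x y) := by
            rw [Finset.mul_sum]
            refine Finset.sum_congr rfl fun x _ => ?_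
            rw [Stmt12Aux.qchar_eq, Stmt12Aux.psiF_eq p]
            ring
        _ = ∑ x : Fin 3 → F, (∑ u : F, χ u * ψ (u * DiscBQ x)) * ψ (bformBQ x y) := by
            refine Finset.sum_congr rfl fun x _ => ?_
            rw [Stmt12Aux.L1 hF2]
        _ = ∑ x : Fin 3 → F, ∑ u : F, χ u * ψ (u * DiscBQ x + bformBQ x y) := by
            refine Finset.sum_congr rfl fun x _ => ?_
            rw [Finset.sum_mul]
            refine Finset.sum_congr rfl fun u _ => ?_
            rw [AddChar.map_add_eq_mul]
            ring
        _ = ∑ u : F, χ u * ∑ x : Fin 3 → F, ψ (u * DiscBQ x + bformBQ x y) := by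
            rw [Finset.sum_comm]
            exact Finset.sum_congr rfl fun u _ => (Finset.mul_sum _ _ _).symm
        _ = ∑ u : F, q * g * (χ u * χ u) * ψ (-(DiscBQ y) / (16 * u)) := by
            exact Finset.sum_congr rfl fun u _ => per_u u
        _ = (∑ u ∈ Finset.univ.erase (0 : F),
              q * g * (χ u * χ u) * ψ (-(DiscBQ y) / (16 * u)))
            + q * g * (χ 0 * χ 0) * ψ (-(DiscBQ y) / (16 * 0)) :=
            (Finset.sum_erase_add _ _ (Finset.mem_univ 0)).symm
        _ = g * (q * ∑ u ∈ Finset.univ.erase (0 : F), ψ (-(DiscBQ y) / (16 * u))) := by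
            rw [show χ (0 : F) = 0 from Stmt12Aux.chiQ_zero]
            rw [Finset.mul_sum, Finset.mul_sum]
            simp only [mul_zero, zero_mul, add_zero]
            refine Finset.sum_congr rfl fun u hu => ?_
            rw [Stmt12Aux.chiQ_sq hF2 u (Finset.ne_of_mem_erase hu)]
            ring
    have hFT : FTBQ p (fun x => qchar (DiscBQ x)) y
        = (q ^ 3)⁻¹ * (q * ∑ u ∈ Finset.univ.erase (0 : F), ψ (-(DiscBQ y) / (16 * u))) := by
      rw [FTBQ, hS]
    by_cases hD : DiscBQ y = 0
    · rw [if_pos hD, hFT]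
      have hone : ∀ u ∈ Finset.univ.erase (0 : F), ψ (-(DiscBQ y) / (16 * u)) = 1 := by
        intro u _
        rw [hD, neg_zero, zero_div, AddChar.map_zero_eq_one]
      rw [Finset.sum_congr rfl hone, Finset.sum_const, nsmul_eq_mul, mul_one]
      rw [Finset.card_erase_of_mem (Finset.mem_univ 0), Finset.card_univ]
      have hcast : ((Fintype.card F - 1 : ℕ) : ℂ) = q - 1 := by
        rw [Nat.cast_sub Fintype.card_pos, Nat.cast_one]
      rw [hcast]
      field_simp
    · rw [if_neg hD, hFT]
      have hbij : ∑ u ∈ Finset.univ.erase (0 : F), ψ (-(DiscBQ y) / (16 * u))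
          = ∑ v ∈ Finset.univ.erase (0 : F), ψ v := by
        refine Finset.sum_nbij' (fun u => -(DiscBQ y) / (16 * u))
          (fun v => -(DiscBQ y) / (16 * v)) ?_ ?_ ?_ ?_ ?_
        · intro u hu
          rw [Finset.mem_erase] at hu ⊢
          exact ⟨div_ne_zero (neg_ne_zero.mpr hD) (mul_ne_zero h16 hu.1), Finset.mem_univ _⟩
        · intro v hv
          rw [Finset.mem_erase] at hv ⊢
          exact ⟨div_ne_zero (neg_ne_zero.mpr hD) (mul_ne_zero h16 hv.1), Finset.mem_univ _⟩
        · intro u hu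
          rw [Finset.mem_erase] at hu
          field_simp
        · intro v hv
          rw [Finset.mem_erase] at hv
          field_simp
        · intro u _
          rfl
      have herase : ∑ v ∈ Finset.univ.erase (0 : F), ψ v = -1 := by
        have hadd := Finset.sum_erase_add Finset.univ (fun v => ψ v) (Finset.mem_univ (0 : F))
        have hz : ∑ v : F, ψ v = 0 := AddChar.sum_eq_zero_of_ne_one (Stmt12Aux.psiE_ne_one p)
        simp only [hz, AddChar.map_zero_eq_one] at hadd
        linear_combination hadd
      rw [hbij, herase]
      field_simp
  refine ⟨fun y => ⟨fun hD => ?_, fun hD => ?_⟩, fun y hD => ?_⟩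
  · rw [main y, if_pos hD, hQ]
  · rw [main y, if_neg hD, hQ]
  · rw [main y, if_pos hD]
    have heq : 1 / (Fintype.card F : ℂ) - 1 / (Fintype.card F : ℂ) ^ 2
        = ((Fintype.card F : ℂ) - 1) / (Fintype.card F : ℂ) ^ 2 := by
      field_simp
    rw [heq]
    exact div_ne_zero (sub_ne_zero.mpr hq1) (pow_ne_zero 2 hq0)

end
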